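/- arXiv:1510.09129 — 2 statements merged into one kernel-verified Lean document; each statement's English description precedes it below -/
import Mathlib

section
/- The set of 30 rules for a locomotive going down a vertical track (Table 2 of the paper, rules 17–46) is rotation-consistent. The rules are: (W,WBWBWBBBWW,W), (W,WBWRBBWWBB,R), (W,WWWWBRBWWW,W), (R,WBWWBBWWBB,W), (W,RWWWBWBWWW,W), (W,RBWWBBWWWW,W), (W,WBWWWWRWWW,W), (B,WBWWBWWWWW,B), (W,BWWWWWBWWW,W), (W,BWWWWBWWWW,W), (B,BWBWWWWRWW,B), (B,BRBWWWWWWW,B), (B,BWWWWWRWWW,B), (W,WBWBWBBWWW,W), (W,WWWWWBBWWW,W), (W,RBWWBBWWBB,W), (W,WBWWBBWWWW,W), (B,BWBWWWRWWW,B), (W,RBWBWBBWWW,R), (B,WBWWWWRWWW,B), (R,WBWRBBWWBB,R), (W,RWWWBRBWWW,W), (R,RBWWBBWWBB,W), (B,RWWWWWRWWW,B), (B,BRBWWWWRWW,B), (B,BRBWWWRWWW,B), (R,RBWBWBBWWW,R), (B,RBWWWWRWWW,B), (W,RWWWWBBWWW,W), (W,BWWWWWRWWW,W). -/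
/-- The three states of the cellular automaton: W (white, quiescent),
B (blue) and R (red). -/
inductive CAState : Type
  | W | B | R
  deriving DecidableEq, Repr

open CAState

/-- A neighbourhood: a word of length 10 over {W,B,R}; positions 0-4
(paper's 1-5) are the side-neighbours, positions 5-9 (paper's 6-10)
the vertex-neighbours. -/
abbrev Nbhd := Fin 10 → CAState

/-- Build a neighbourhood from its ten letters. -/
def nb (a b c d e f g h i j : CAState) : Nbhd := ![a, b, c, d, e, f, g, h, i, j]

/-- The rotation ρ: simultaneous cyclic shift of the side part and of the
vertex part: ρ(x1…x10) = x2x3x4x5x1x7x8x9x10x6. -/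
def rho (n : Nbhd) : Nbhd := fun i => n (![1, 2, 3, 4, 0, 6, 7, 8, 9, 5] i)

/-- Two neighbourhoods are rotation-equivalent if one is ρ^k of the other. -/
def RotEquiv (n m : Nbhd) : Prop := ∃ k : ℕ, n = rho^[k] m

/-- A rule: (current state, neighbourhood, new state). -/
abbrev Rule := CAState × Nbhd × CAState

/-- A set of rules is rotation-consistent if any two rules with the same
current state and rotation-equivalent neighbourhoods have the same new
state. -/
def RotationConsistent (L : List Rule) : Prop :=
  ∀ r₁ ∈ L, ∀ r₂ ∈ L, r₁.1 = r₂.1 → RotEquiv r₁.2.1 r₂.2.1 → r₁.2.2 = r₂.2.2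

lemma rho_five (n : Nbhd) : rho^[5] n = n := by
  show rho (rho (rho (rho (rho n)))) = n
  funext i
  fin_cases i <;> rfl

lemma rho_iterate_mod (k : ℕ) (n : Nbhd) : rho^[k] n = rho^[k % 5] n := by
  conv_lhs => rw [← Nat.div_add_mod k 5, Nat.add_comm, Function.iterate_add_apply,
    Function.iterate_mul]
  congr 1
  induction k / 5 with
  | zero => rfl
  | succ q ih => rw [Function.iterate_succ_apply, rho_five, ih]

lemma rotEquiv_iff (n m : Nbhd) : RotEquiv n m ↔ ∃ k : Fin 5, n = rho^[k.val] m := by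
  constructor
  · rintro ⟨k, rfl⟩
    exact ⟨⟨k % 5, Nat.mod_lt _ (by norm_num)⟩, rho_iterate_mod k m⟩
  · rintro ⟨k, rfl⟩
    exact ⟨k.val, rfl⟩

theorem down_track_rules_rotation_consistent :
    RotationConsistent [
    (W, nb W B W B W B B B W W, W),
    (W, nb W B W R B B W W B B, R),
    (W, nb W W W W B R B W W W, W),
    (R, nb W B W W B B W W B B, W),
    (W, nb R W W W B W B W W W, W),
    (W, nb R B W W B B W W W W, W),
    (W, nb W B W W W W R W W W, W),
    (B, nb W B W W B W W W W W, B),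
    (W, nb B W W W W W B W W W, W),
    (W, nb B W W W W B W W W W, W),
    (B, nb B W B W W W W R W W, B),
    (B, nb B R B W W W W W W W, B),
    (B, nb B W W W W W R W W W, B),
    (W, nb W B W B W B B W W W, W),
    (W, nb W W W W W B B W W W, W),
    (W, nb R B W W B B W W B B, W),
    (W, nb W B W W B B W W W W, W),
    (B, nb B W B W W W R W W W, B),
    (W, nb R B W B W B B W W W, R),
    (B, nb W B W W W W R W W W, B),
    (R, nb W B W R B B W W B B, R),
    (W, nb R W W W B R B W W W, W),
    (R, nb R B W W B B W W B B, W),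
    (B, nb R W W W W W R W W W, B),
    (B, nb B R B W W W W R W W, B),
    (B, nb B R B W W W R W W W, B),
    (R, nb R B W B W B B W W W, R),
    (B, nb R B W W W W R W W W, B),
    (W, nb R W W W W B B W W W, W),
    (W, nb B W W W W W R W W W, W)] := by
  intro r₁ h₁ r₂ h₂ hs hrot
  rw [rotEquiv_iff] at hrot
  revert hs hrot
  fin_cases h₁ <;> fin_cases h₂ <;> decide
end

section
/- The set of 15 rules for changing the selection in the passive memory switch (Table 30 of the paper, rules 338–352) is rotation-consistent. The rules are: (R,BWWWRBBWWW,R), (B,BRWBWWRWWR,B), (R,BRWWWWBWWW,R), (W,BWWWWBRWWW,W), (B,WBRBWWWWRR,B), (B,BRWBRWRWWW,B), (W,WBWWBWBRWW,W), (B,WBRBRWWWRW,R), (B,BRWBWRRWWW,B), (R,WBRBWWWWRW,R), (R,RWWWRBBWWW,R), (B,RRWBWWRWWW,B), (R,BRWWWWRWWW,R), (W,BBRBWWWBWW,W), (B,WWWWBRBWWW,B). -/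
open CAState

lemma rho_mul_five (q : ℕ) (n : Nbhd) : rho^[5 * q] n = n := by
  induction q with
  | zero => rfl
  | succ q ih =>
      rw [Nat.mul_succ, Function.iterate_add_apply, rho_five, ih]

lemma rotEquiv_bounded {n m : Nbhd} (h : RotEquiv n m) :
    ∃ k < 5, n = rho^[k] m := by
  obtain ⟨k, hk⟩ := h
  refine ⟨k % 5, Nat.mod_lt _ (by norm_num), ?_⟩
  have h5 : k = 5 * (k / 5) + k % 5 := by omega
  rw [hk]
  conv_lhs => rw [h5, Function.iterate_add_apply, rho_mul_five]

theorem passive_memory_selection_rules_rotation_consistent :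
    RotationConsistent [
    (R, nb B W W W R B B W W W, R),
    (B, nb B R W B W W R W W R, B),
    (R, nb B R W W W W B W W W, R),
    (W, nb B W W W W B R W W W, W),
    (B, nb W B R B W W W W R R, B),
    (B, nb B R W B R W R W W W, B),
    (W, nb W B W W B W B R W W, W),
    (B, nb W B R B R W W W R W, R),
    (B, nb B R W B W R R W W W, B),
    (R, nb W B R B W W W W R W, R),
    (R, nb R W W W R B B W W W, R),
    (B, nb R R W B W W R W W W, B),
    (R, nb B R W W W W R W W W, R),
    (W, nb B B R B W W W B W W, W),
    (B, nb W W W W B R B W W W, B)] := by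
  intro r₁ h₁ r₂ h₂ hs hre
  obtain ⟨k, hk, heq⟩ := rotEquiv_bounded hre
  clear hre
  interval_cases k <;> revert r₁ r₂ <;> decide
end
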